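/- Let 𝒰, 𝒳, 𝒴, 𝒱 be finite sets and P a joint pmf on 𝒰×𝒳×𝒴×𝒱 with strictly positive marginals P_U, P_X, P_Y, P_V, such that U ↔ X ↔ Y ↔ V forms a Markov chain, i.e., P(u,x,y,v)·P_X(x)·P_Y(y) = P_{U,X}(u,x)·P_{X,Y}(x,y)·P_{Y,V}(y,v) for all u,x,y,v. Then for every u ∈ 𝒰 and v ∈ 𝒱: P_{U,V}(u,v) = P_U(u)·P_V(v)·[1 + Σ_{x,y} (P_{X|U}(x|u) − P_X(x)) · (P_{X,Y}(x,y)/(P_X(x)P_Y(y))) · (P_{Y|V}(y|v) − P_Y(y))], where P_{X|U}(x|u) = P_{U,X}(u,x)/P_U(u) and P_{Y|V}(y|v) = P_{Y,V}(y,v)/P_V(v). -/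

import Mathlib

private lemma stmt_9_aux (a b c pu px py pv : ℝ)
    (hpu : pu ≠ 0) (hpx : px ≠ 0) (hpy : py ≠ 0) (hpv : pv ≠ 0) :
    (a / pu - px) * (b / (px * py)) * (c / pv - py)
      = a * b * c / (px * py) / (pu * pv) - a / px * b / pu - b * (c / py) / pv + b := by
  field_simp
  ring

theorem stmt_9 {U X Y V : Type*} [Fintype U] [Fintype X] [Fintype Y] [Fintype V]
    (P : U → X → Y → V → ℝ)
    (hP : ∀ u x y v, 0 ≤ P u x y v)
    (hsum : ∑ u, ∑ x, ∑ y, ∑ v, P u x y v = 1)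
    (PU : U → ℝ) (hPU : ∀ u, PU u = ∑ x, ∑ y, ∑ v, P u x y v)
    (PX : X → ℝ) (hPX : ∀ x, PX x = ∑ u, ∑ y, ∑ v, P u x y v)
    (PY : Y → ℝ) (hPY : ∀ y, PY y = ∑ u, ∑ x, ∑ v, P u x y v)
    (PV : V → ℝ) (hPV : ∀ v, PV v = ∑ u, ∑ x, ∑ y, P u x y v)
    (hPUpos : ∀ u, 0 < PU u) (hPXpos : ∀ x, 0 < PX x)
    (hPYpos : ∀ y, 0 < PY y) (hPVpos : ∀ v, 0 < PV v)
    (hMarkov : ∀ u x y v, P u x y v * PX x * PY y =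
        (∑ y', ∑ v', P u x y' v') * (∑ u', ∑ v', P u' x y v') * (∑ u', ∑ x', P u' x' y v)) :
    ∀ u v, (∑ x, ∑ y, P u x y v)
        = PU u * PV v * (1 + ∑ x, ∑ y,
            ((∑ y', ∑ v', P u x y' v') / PU u - PX x) *
            ((∑ u', ∑ v', P u' x y v') / (PX x * PY y)) *
            ((∑ u', ∑ x', P u' x' y v) / PV v - PY y)) := by
  intro u v
  have hPXne : ∀ x, PX x ≠ 0 := fun x => (hPXpos x).ne'
  have hPYne : ∀ y, PY y ≠ 0 := fun y => (hPYpos y).ne'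
  have hPUne : PU u ≠ 0 := (hPUpos u).ne'
  have hPVne : PV v ≠ 0 := (hPVpos v).ne'
  have hkey : ∀ x y, (∑ y', ∑ v', P u x y' v') * (∑ u', ∑ v', P u' x y v') *
      (∑ u', ∑ x', P u' x' y v) / (PX x * PY y) = P u x y v := by
    intro x y
    rw [div_eq_iff (mul_ne_zero (hPXne x) (hPYne y))]
    linear_combination -(hMarkov u x y v)
  have hAx : ∑ x, ∑ y', ∑ v', P u x y' v' = PU u := (hPU u).symm
  have hBx : ∀ x, (∑ y, ∑ u', ∑ v', P u' x y v') = PX x := by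
    intro x; rw [hPX]; exact Finset.sum_comm
  have hBy : ∀ y, (∑ x, ∑ u', ∑ v', P u' x y v') = PY y := by
    intro y; rw [hPY]; exact Finset.sum_comm
  have hCy : (∑ y, ∑ u', ∑ x', P u' x' y v) = PV v := by
    calc ∑ y, ∑ u', ∑ x', P u' x' y v
        = ∑ u', ∑ y, ∑ x', P u' x' y v := Finset.sum_comm
      _ = ∑ u', ∑ x', ∑ y, P u' x' y v :=
          Finset.sum_congr rfl fun _ _ => Finset.sum_comm
      _ = PV v := (hPV v).symm
  have hPX1 : ∑ x, PX x = 1 := by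
    calc ∑ x, PX x = ∑ x, ∑ u, ∑ y, ∑ v, P u x y v := by simp only [hPX]
      _ = ∑ u, ∑ x, ∑ y, ∑ v, P u x y v := Finset.sum_comm
      _ = 1 := hsum
  have hsplit : ∀ (x : X) (y : Y),
      ((∑ y', ∑ v', P u x y' v') / PU u - PX x) *
        ((∑ u', ∑ v', P u' x y v') / (PX x * PY y)) *
        ((∑ u', ∑ x', P u' x' y v) / PV v - PY y)
      = P u x y v / (PU u * PV v)
        - (∑ y', ∑ v', P u x y' v') / PX x * (∑ u', ∑ v', P u' x y v') / PU u
        - (∑ u', ∑ v', P u' x y v') * ((∑ u', ∑ x', P u' x' y v) / PY y) / PV v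
        + (∑ u', ∑ v', P u' x y v') := by
    intro x y
    rw [← hkey x y]
    exact stmt_9_aux _ _ _ _ _ _ _ hPUne (hPXne x) (hPYne y) hPVne
  have t1 : ∑ x, ∑ y, P u x y v / (PU u * PV v)
      = (∑ x, ∑ y, P u x y v) / (PU u * PV v) := by
    simp [Finset.sum_div]
  have t2 : ∑ x, ∑ y, (∑ y', ∑ v', P u x y' v') / PX x * (∑ u', ∑ v', P u' x y v') / PU u
      = 1 := by
    have h : ∀ x, (∑ y, (∑ y', ∑ v', P u x y' v') / PX x * (∑ u', ∑ v', P u' x y v') / PU u)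
        = (∑ y', ∑ v', P u x y' v') / PU u := by
      intro x
      rw [← Finset.sum_div, ← Finset.mul_sum, hBx x, div_mul_cancel₀ _ (hPXne x)]
    rw [Finset.sum_congr rfl fun x _ => h x, ← Finset.sum_div, hAx, div_self hPUne]
  have t3 : ∑ x, ∑ y,
      (∑ u', ∑ v', P u' x y v') * ((∑ u', ∑ x', P u' x' y v) / PY y) / PV v = 1 := by
    rw [Finset.sum_comm]
    have h : ∀ y, (∑ x, (∑ u', ∑ v', P u' x y v') * ((∑ u', ∑ x', P u' x' y v) / PY y) / PV v)
        = (∑ u', ∑ x', P u' x' y v) / PV v := by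
      intro y
      rw [← Finset.sum_div, ← Finset.sum_mul, hBy y, mul_div_cancel₀ _ (hPYne y)]
    rw [Finset.sum_congr rfl fun y _ => h y, ← Finset.sum_div, hCy, div_self hPVne]
  have t4 : ∑ x, ∑ y, (∑ u', ∑ v', P u' x y v') = 1 := by
    rw [Finset.sum_congr rfl fun x _ => hBx x, hPX1]
  have hS : (∑ x, ∑ y,
      ((∑ y', ∑ v', P u x y' v') / PU u - PX x) *
        ((∑ u', ∑ v', P u' x y v') / (PX x * PY y)) *
        ((∑ u', ∑ x', P u' x' y v) / PV v - PY y))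
      = (∑ x, ∑ y, P u x y v) / (PU u * PV v) - 1 := by
    calc (∑ x, ∑ y,
        ((∑ y', ∑ v', P u x y' v') / PU u - PX x) *
          ((∑ u', ∑ v', P u' x y v') / (PX x * PY y)) *
          ((∑ u', ∑ x', P u' x' y v) / PV v - PY y))
        = ∑ x, ∑ y, (P u x y v / (PU u * PV v)
            - (∑ y', ∑ v', P u x y' v') / PX x * (∑ u', ∑ v', P u' x y v') / PU u
            - (∑ u', ∑ v', P u' x y v') * ((∑ u', ∑ x', P u' x' y v) / PY y) / PV v
            + (∑ u', ∑ v', P u' x y v')) := by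
          exact Finset.sum_congr rfl fun x _ => Finset.sum_congr rfl fun y _ => hsplit x y
      _ = (∑ x, ∑ y, P u x y v / (PU u * PV v))
            - (∑ x, ∑ y, (∑ y', ∑ v', P u x y' v') / PX x * (∑ u', ∑ v', P u' x y v') / PU u)
            - (∑ x, ∑ y, (∑ u', ∑ v', P u' x y v') * ((∑ u', ∑ x', P u' x' y v) / PY y) / PV v)
            + (∑ x, ∑ y, (∑ u', ∑ v', P u' x y v')) := by
          simp [Finset.sum_sub_distrib, Finset.sum_add_distrib]
      _ = (∑ x, ∑ y, P u x y v) / (PU u * PV v) - 1 := by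
          rw [t1, t2, t3, t4]; ring
  rw [hS]
  field_simp
  ring
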